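/- Let A be an m×n real matrix game with val(A) ≠ 0. Then A has a Shapley–Snow kernel that is a completely mixed game: there exist index sets I ⊆ {1,…,m}, J ⊆ {1,…,n} with |I| = |J| such that Ā = A[I,J] is invertible, val(Ā) = val(A) = (𝟏ᵀ Ā⁻¹ 𝟏)⁻¹, and every optimal strategy pair of the matrix game Ā has all components strictly positive. -/

import Mathlib

open Matrix

/-- The payoff `xᵀ A y` of the zero-sum matrix game `A` under mixed strategies `x`, `y`. -/
noncomputable def payoff {m n : ℕ} (A : Matrix (Fin m) (Fin n) ℝ)
    (x : Fin m → ℝ) (y : Fin n → ℝ) : ℝ := x ⬝ᵥ A.mulVec y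

/-- The value `val(A) = max_{x ∈ Δ_m} min_{y ∈ Δ_n} xᵀ A y` of the matrix game `A`. -/
noncomputable def matrixVal {m n : ℕ} (A : Matrix (Fin m) (Fin n) ℝ) : ℝ :=
  ⨆ x : stdSimplex ℝ (Fin m), ⨅ y : stdSimplex ℝ (Fin n), payoff A x.1 y.1

/-- `(x0, y0)` is an optimal (saddle-point) strategy pair for the matrix game `A`. -/
def IsOptimalPair {m n : ℕ} (A : Matrix (Fin m) (Fin n) ℝ)
    (x0 : Fin m → ℝ) (y0 : Fin n → ℝ) : Prop :=
  x0 ∈ stdSimplex ℝ (Fin m) ∧ y0 ∈ stdSimplex ℝ (Fin n) ∧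
    (∀ x ∈ stdSimplex ℝ (Fin m), payoff A x y0 ≤ payoff A x0 y0) ∧
    (∀ y ∈ stdSimplex ℝ (Fin n), payoff A x0 y0 ≤ payoff A x0 y)

section Aux
open Finset

section Helpers
variable {m n : ℕ} {A : Matrix (Fin m) (Fin n) ℝ} {x : Fin m → ℝ} {y : Fin n → ℝ} {c : ℝ}

lemma payoff_eq_sum_right : payoff A x y = ∑ j, (vecMul x A) j * y j := by
  rw [payoff, dotProduct_mulVec]; rfl

lemma payoff_eq_sum_left : payoff A x y = ∑ i, x i * (A.mulVec y) i := rfl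

lemma le_payoff_right (hy : y ∈ stdSimplex ℝ (Fin n)) (h : ∀ j, c ≤ vecMul x A j) :
    c ≤ payoff A x y := by
  rw [payoff_eq_sum_right]
  calc c = ∑ j, c * y j := by rw [← Finset.mul_sum, hy.2, mul_one]
  _ ≤ ∑ j, (vecMul x A) j * y j :=
    Finset.sum_le_sum fun j _ => mul_le_mul_of_nonneg_right (h j) (hy.1 j)

lemma payoff_le_right (hy : y ∈ stdSimplex ℝ (Fin n)) (h : ∀ j, vecMul x A j ≤ c) :
    payoff A x y ≤ c := by
  rw [payoff_eq_sum_right]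
  calc ∑ j, (vecMul x A) j * y j ≤ ∑ j, c * y j :=
    Finset.sum_le_sum fun j _ => mul_le_mul_of_nonneg_right (h j) (hy.1 j)
  _ = c := by rw [← Finset.mul_sum, hy.2, mul_one]

lemma le_payoff_left (hx : x ∈ stdSimplex ℝ (Fin m)) (h : ∀ i, c ≤ A.mulVec y i) :
    c ≤ payoff A x y := by
  rw [payoff_eq_sum_left]
  calc c = ∑ i, x i * c := by rw [← Finset.sum_mul, hx.2, one_mul]
  _ ≤ ∑ i, x i * A.mulVec y i :=
    Finset.sum_le_sum fun i _ => mul_le_mul_of_nonneg_left (h i) (hx.1 i)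

lemma payoff_le_left (hx : x ∈ stdSimplex ℝ (Fin m)) (h : ∀ i, A.mulVec y i ≤ c) :
    payoff A x y ≤ c := by
  rw [payoff_eq_sum_left]
  calc ∑ i, x i * A.mulVec y i ≤ ∑ i, x i * c :=
    Finset.sum_le_sum fun i _ => mul_le_mul_of_nonneg_left (h i) (hx.1 i)
  _ = c := by rw [← Finset.sum_mul, hx.2, one_mul]

lemma payoff_single_right (j : Fin n) : payoff A x (Pi.single j 1) = vecMul x A j := by
  rw [payoff_eq_sum_right]
  simp [Pi.single_apply, Finset.sum_ite_eq']

lemma payoff_single_left (i : Fin m) : payoff A (Pi.single i 1) y = A.mulVec y i := by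
  rw [payoff_eq_sum_left]
  simp [Pi.single_apply, Finset.sum_ite_eq]

lemma bddBelow_payoff (hm : 0 < m) (x : Fin m → ℝ) :
    BddBelow (Set.range fun y : stdSimplex ℝ (Fin n) => payoff A x y.1) := by
  by_cases hn : 0 < n
  · haveI : Nonempty (Fin n) := ⟨⟨0, hn⟩⟩
    refine ⟨Finset.univ.inf' ⟨Classical.arbitrary (Fin n), mem_univ _⟩ (vecMul x A), ?_⟩
    rintro r ⟨y, rfl⟩
    exact le_payoff_right y.2 fun j => Finset.inf'_le _ (mem_univ j)
  · refine ⟨0, ?_⟩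
    rintro r ⟨y, rfl⟩
    haveI : IsEmpty (Fin n) := ⟨fun j => hn (Nat.pos_of_ne_zero (fun h0 => (h0 ▸ j).elim0))⟩
    show (0:ℝ) ≤ payoff A x y.1
    rw [payoff_eq_sum_right, Finset.univ_eq_empty, Finset.sum_empty]

/-- Key computation of the value from a pair of guarantee strategies. -/
lemma matrixVal_eq (hm : 0 < m) {v : ℝ} {x0 : Fin m → ℝ} {y0 : Fin n → ℝ}
    (hx0 : x0 ∈ stdSimplex ℝ (Fin m)) (hy0 : y0 ∈ stdSimplex ℝ (Fin n))
    (hx : ∀ j, v ≤ vecMul x0 A j) (hy : ∀ i, A.mulVec y0 i ≤ v) : matrixVal A = v := by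
  haveI : Nonempty (stdSimplex ℝ (Fin m)) := ⟨⟨x0, hx0⟩⟩
  haveI : Nonempty (stdSimplex ℝ (Fin n)) := ⟨⟨y0, hy0⟩⟩
  have hub : ∀ x : stdSimplex ℝ (Fin m),
      (⨅ y : stdSimplex ℝ (Fin n), payoff A x.1 y.1) ≤ v := fun x =>
    le_trans (ciInf_le (bddBelow_payoff hm x.1) ⟨y0, hy0⟩) (payoff_le_left x.2 hy)
  refine le_antisymm (ciSup_le hub) ?_
  have h1 : v ≤ ⨅ y : stdSimplex ℝ (Fin n), payoff A x0 y.1 :=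
    le_ciInf fun y => le_payoff_right y.2 hx
  have hba : BddAbove (Set.range fun x : stdSimplex ℝ (Fin m) =>
      ⨅ y : stdSimplex ℝ (Fin n), payoff A x.1 y.1) := by
    refine ⟨v, ?_⟩; rintro r ⟨x, rfl⟩; exact hub x
  exact le_trans h1 (le_ciSup hba ⟨x0, hx0⟩)

lemma isOptimalPair_of {v : ℝ} {x0 : Fin m → ℝ} {y0 : Fin n → ℝ}
    (hx0 : x0 ∈ stdSimplex ℝ (Fin m)) (hy0 : y0 ∈ stdSimplex ℝ (Fin n))
    (hx : ∀ j, v ≤ vecMul x0 A j) (hy : ∀ i, A.mulVec y0 i ≤ v) :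
    IsOptimalPair A x0 y0 := by
  have hv : payoff A x0 y0 = v :=
    le_antisymm (payoff_le_left hx0 hy) (le_payoff_right hy0 hx)
  exact ⟨hx0, hy0, fun x hxm => hv ▸ payoff_le_left hxm hy,
    fun y hyn => hv ▸ le_payoff_right hyn hx⟩

lemma IsOptimalPair.val_eq (hm : 0 < m) {x0 : Fin m → ℝ} {y0 : Fin n → ℝ}
    (h : IsOptimalPair A x0 y0) : matrixVal A = payoff A x0 y0 := by
  refine matrixVal_eq hm h.1 h.2.1 (fun j => ?_) (fun i => ?_)
  · rw [← payoff_single_right]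
    exact h.2.2.2 _ (single_mem_stdSimplex ℝ j)
  · rw [← payoff_single_left]
    exact h.2.2.1 _ (single_mem_stdSimplex ℝ i)

lemma IsOptimalPair.vecMul_ge (hm : 0 < m) {x0 : Fin m → ℝ} {y0 : Fin n → ℝ}
    (h : IsOptimalPair A x0 y0) : ∀ j, matrixVal A ≤ vecMul x0 A j := fun j => by
  rw [h.val_eq hm, ← payoff_single_right]
  exact h.2.2.2 _ (single_mem_stdSimplex ℝ j)

lemma IsOptimalPair.mulVec_le (hm : 0 < m) {x0 : Fin m → ℝ} {y0 : Fin n → ℝ}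
    (h : IsOptimalPair A x0 y0) : ∀ i, A.mulVec y0 i ≤ matrixVal A := fun i => by
  rw [h.val_eq hm, ← payoff_single_left]
  exact h.2.2.1 _ (single_mem_stdSimplex ℝ i)

end Helpers

section Perturb
variable {m n : ℕ}

lemma mulVec_add_smul (A : Matrix (Fin m) (Fin n) ℝ) (w w' : Fin n → ℝ) (c : ℝ) (i : Fin m) :
    A.mulVec (fun j => w j + c * w' j) i = A.mulVec w i + c * A.mulVec w' i := by
  simp only [Matrix.mulVec, dotProduct]
  rw [Finset.sum_congr rfl (fun j _ => show A i j * (w j + c * w' j)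
    = A i j * w j + c * (A i j * w' j) by ring), Finset.sum_add_distrib, ← Finset.mul_sum]

lemma vecMul_add_smul (A : Matrix (Fin m) (Fin n) ℝ) (w w' : Fin m → ℝ) (c : ℝ) (j : Fin n) :
    vecMul (fun i => w i + c * w' i) A j = vecMul w A j + c * vecMul w' A j := by
  simp only [Matrix.vecMul, dotProduct]
  rw [Finset.sum_congr rfl (fun i _ => show (w i + c * w' i) * A i j
    = w i * A i j + c * (w' i * A i j) by ring), Finset.sum_add_distrib, ← Finset.mul_sum]

lemma exists_pos_forall_le {α : Type*} (s : Finset α) (f : α → ℝ)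
    (h : ∀ a ∈ s, 0 < f a) : ∃ ε : ℝ, 0 < ε ∧ ∀ a ∈ s, ε ≤ f a := by
  rcases s.eq_empty_or_nonempty with rfl | hs
  · exact ⟨1, one_pos, by simp⟩
  · exact ⟨s.inf' hs f, (Finset.lt_inf'_iff hs).2 h, fun a ha => Finset.inf'_le f ha⟩

lemma slack_col {m n : ℕ} {A : Matrix (Fin m) (Fin n) ℝ} {v : ℝ} {xs : Fin m → ℝ} {ys : Fin n → ℝ}
    (hxs : xs ∈ stdSimplex ℝ (Fin m)) (hxsge : ∀ j, v ≤ vecMul xs A j)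
    (hys : ys ∈ stdSimplex ℝ (Fin n)) (hysle : ∀ i, A.mulVec ys i ≤ v) :
    ∀ j, ys j ≠ 0 → vecMul xs A j = v := by
  have hpay : payoff A xs ys = v :=
    le_antisymm (payoff_le_left hxs hysle) (le_payoff_right hys hxsge)
  intro j hj
  by_contra hne
  have hgt : v < vecMul xs A j := lt_of_le_of_ne (hxsge j) (Ne.symm hne)
  have hstrict : v < payoff A xs ys := by
    rw [payoff_eq_sum_right]
    have h1 : ∀ j', j' ∈ Finset.univ → v * ys j' ≤ vecMul xs A j' * ys j' :=
      fun j' _ => mul_le_mul_of_nonneg_right (hxsge j') (hys.1 j')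
    have h2 : v * ys j < vecMul xs A j * ys j :=
      mul_lt_mul_of_pos_right hgt (lt_of_le_of_ne (hys.1 j) (Ne.symm hj))
    calc v = ∑ j', v * ys j' := by rw [← Finset.mul_sum, hys.2, mul_one]
    _ < ∑ j', vecMul xs A j' * ys j' :=
      Finset.sum_lt_sum h1 ⟨j, Finset.mem_univ j, h2⟩
  exact absurd hpay (ne_of_gt hstrict)

lemma slack_row {m n : ℕ} {A : Matrix (Fin m) (Fin n) ℝ} {v : ℝ} {xs : Fin m → ℝ} {ys : Fin n → ℝ}
    (hxs : xs ∈ stdSimplex ℝ (Fin m)) (hxsge : ∀ j, v ≤ vecMul xs A j)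
    (hys : ys ∈ stdSimplex ℝ (Fin n)) (hysle : ∀ i, A.mulVec ys i ≤ v) :
    ∀ i, xs i ≠ 0 → A.mulVec ys i = v := by
  have hpay : payoff A xs ys = v :=
    le_antisymm (payoff_le_left hxs hysle) (le_payoff_right hys hxsge)
  intro i hi
  by_contra hne
  have hlt : A.mulVec ys i < v := lt_of_le_of_ne (hysle i) hne
  have hstrict : payoff A xs ys < v := by
    rw [payoff_eq_sum_left]
    have h1 : ∀ i', i' ∈ Finset.univ → xs i' * A.mulVec ys i' ≤ xs i' * v :=
      fun i' _ => mul_le_mul_of_nonneg_left (hysle i') (hxs.1 i')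
    have h2 : xs i * A.mulVec ys i < xs i * v :=
      mul_lt_mul_of_pos_left hlt (lt_of_le_of_ne (hxs.1 i) (Ne.symm hi))
    calc ∑ i', xs i' * A.mulVec ys i' < ∑ i', xs i' * v :=
      Finset.sum_lt_sum h1 ⟨i, Finset.mem_univ i, h2⟩
    _ = v := by rw [← Finset.sum_mul, hxs.2, one_mul]
  exact absurd hpay (ne_of_lt hstrict)

lemma perturb_col (A : Matrix (Fin m) (Fin n) ℝ) {v : ℝ} (hv : v ≠ 0)
    {xs : Fin m → ℝ} (hxs : xs ∈ stdSimplex ℝ (Fin m)) (hxsge : ∀ j, v ≤ vecMul xs A j)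
    {ys : Fin n → ℝ}
    (hys : ys ∈ Set.extremePoints ℝ
      {y | y ∈ stdSimplex ℝ (Fin n) ∧ ∀ i, A.mulVec y i ≤ v})
    (z : Fin n → ℝ) (hzsupp : ∀ j, ys j = 0 → z j = 0)
    (hzA : ∀ i, A.mulVec ys i = v → A.mulVec z i = 0) : z = 0 := by
  classical
  obtain ⟨hysY, hext⟩ := hys
  obtain ⟨hysΔ, hysle⟩ := hysY
  by_contra hz
  obtain ⟨j0, hj0⟩ : ∃ j0, z j0 ≠ 0 := by
    by_contra hc; push_neg at hc; exact hz (funext hc)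
  -- payoff equals v
  have hpay : payoff A xs ys = v :=
    le_antisymm (payoff_le_left hxs hysle) (le_payoff_right hysΔ hxsge)
  -- complementary slackness, column side
  have hJslack : ∀ j, ys j ≠ 0 → vecMul xs A j = v := by
    intro j hj
    by_contra hne
    have hgt : v < vecMul xs A j := lt_of_le_of_ne (hxsge j) (Ne.symm hne)
    have hstrict : v < payoff A xs ys := by
      rw [payoff_eq_sum_right]
      have h1 : ∀ j', j' ∈ Finset.univ → v * ys j' ≤ vecMul xs A j' * ys j' :=
        fun j' _ => mul_le_mul_of_nonneg_right (hxsge j') (hysΔ.1 j')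
      have h2 : v * ys j < vecMul xs A j * ys j :=
        mul_lt_mul_of_pos_right hgt (lt_of_le_of_ne (hysΔ.1 j) (Ne.symm hj))
      calc v = ∑ j', v * ys j' := by rw [← Finset.mul_sum, hysΔ.2, mul_one]
      _ < ∑ j', vecMul xs A j' * ys j' :=
        Finset.sum_lt_sum h1 ⟨j, Finset.mem_univ j, h2⟩
    exact absurd hpay (ne_of_gt hstrict)
  -- complementary slackness, row side
  have hIslack : ∀ i, xs i ≠ 0 → A.mulVec ys i = v := by
    intro i hi
    by_contra hne
    have hlt : A.mulVec ys i < v := lt_of_le_of_ne (hysle i) hne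
    have hstrict : payoff A xs ys < v := by
      rw [payoff_eq_sum_left]
      have h1 : ∀ i', i' ∈ Finset.univ → xs i' * A.mulVec ys i' ≤ xs i' * v :=
        fun i' _ => mul_le_mul_of_nonneg_left (hysle i') (hxs.1 i')
      have h2 : xs i * A.mulVec ys i < xs i * v :=
        mul_lt_mul_of_pos_left hlt (lt_of_le_of_ne (hxs.1 i) (Ne.symm hi))
      calc ∑ i', xs i' * A.mulVec ys i' < ∑ i', xs i' * v :=
        Finset.sum_lt_sum h1 ⟨i, Finset.mem_univ i, h2⟩
      _ = v := by rw [← Finset.sum_mul, hxs.2, one_mul]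
    exact absurd hpay (ne_of_lt hstrict)
  -- sum of z vanishes
  have hsum : ∑ j, z j = 0 := by
    have hT1 : ∑ j, vecMul xs A j * z j = v * ∑ j, z j := by
      rw [Finset.mul_sum]
      refine Finset.sum_congr rfl fun j _ => ?_
      by_cases hzj : z j = 0
      · rw [hzj, mul_zero, mul_zero]
      · have hyj : ys j ≠ 0 := fun h => hzj (hzsupp j h)
        rw [hJslack j hyj]
    have hT2 : ∑ j, vecMul xs A j * z j = 0 := by
      have hswap : ∑ j, vecMul xs A j * z j = ∑ i, xs i * A.mulVec z i := by
        simp only [Matrix.vecMul, Matrix.mulVec, dotProduct, Finset.sum_mul,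
          Finset.mul_sum]
        rw [Finset.sum_comm]
        exact Finset.sum_congr rfl fun i _ => Finset.sum_congr rfl fun j _ => by ring
      rw [hswap]
      refine Finset.sum_eq_zero fun i _ => ?_
      by_cases hxi : xs i = 0
      · rw [hxi, zero_mul]
      · rw [hzA i (hIslack i hxi), mul_zero]
    rw [hT1] at hT2
    exact (mul_eq_zero.1 hT2).resolve_left hv
  -- choose ε
  obtain ⟨ε1, hε1p, hε1⟩ := exists_pos_forall_le (Finset.univ.filter fun j => ys j ≠ 0)
    (fun j => ys j / (|z j| + 1)) (by
      intro j hj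
      have := (Finset.mem_filter.1 hj).2
      exact div_pos (lt_of_le_of_ne (hysΔ.1 j) (Ne.symm this)) (by positivity))
  obtain ⟨ε2, hε2p, hε2⟩ := exists_pos_forall_le (Finset.univ.filter fun i => A.mulVec ys i ≠ v)
    (fun i => (v - A.mulVec ys i) / (|A.mulVec z i| + 1)) (by
      intro i hi
      have := (Finset.mem_filter.1 hi).2
      exact div_pos (sub_pos.2 (lt_of_le_of_ne (hysle i) this)) (by positivity))
  set ε : ℝ := min ε1 ε2 with hε_def
  have hεp : 0 < ε := lt_min hε1p hε2p
  -- bound on z-coordinates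
  have hbd : ∀ j, ε * |z j| ≤ ys j := by
    intro j
    by_cases hzj : z j = 0
    · rw [hzj]; simp [hysΔ.1 j]
    · have hyj : ys j ≠ 0 := fun h => hzj (hzsupp j h)
      have h1 : ε ≤ ys j / (|z j| + 1) :=
        le_trans (min_le_left _ _) (hε1 j (Finset.mem_filter.2 ⟨Finset.mem_univ _, hyj⟩))
      have h2 : ε * (|z j| + 1) ≤ ys j := (le_div_iff₀ (by positivity)).1 h1
      nlinarith [abs_nonneg (z j), hεp]
  have hbd2 : ∀ i, A.mulVec ys i ≠ v → ε * |A.mulVec z i| ≤ v - A.mulVec ys i := by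
    intro i hi
    have h1 : ε ≤ (v - A.mulVec ys i) / (|A.mulVec z i| + 1) :=
      le_trans (min_le_right _ _) (hε2 i (Finset.mem_filter.2 ⟨Finset.mem_univ _, hi⟩))
    have h2 : ε * (|A.mulVec z i| + 1) ≤ v - A.mulVec ys i := (le_div_iff₀ (by positivity)).1 h1
    nlinarith [abs_nonneg (A.mulVec z i), hεp]
  -- the two perturbed strategies
  have hmem : ∀ c : ℝ, |c| = ε →
      (fun j => ys j + c * z j) ∈ {y | y ∈ stdSimplex ℝ (Fin n) ∧ ∀ i, A.mulVec y i ≤ v} := by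
    intro c hc
    have hcabs : ∀ t : ℝ, c * t ≤ ε * |t| := by
      intro t
      calc c * t ≤ |c * t| := le_abs_self _
      _ = |c| * |t| := abs_mul c t
      _ = ε * |t| := by rw [hc]
    refine ⟨⟨fun j => ?_, ?_⟩, fun i => ?_⟩
    · show (0:ℝ) ≤ ys j + c * z j
      have := hcabs (-z j)
      have h2 : ε * |(-z j)| = ε * |z j| := by rw [abs_neg]
      have h3 : c * (-z j) ≤ ε * |z j| := h2 ▸ this
      have := hbd j
      nlinarith
    · show ∑ j, (ys j + c * z j) = 1
      rw [Finset.sum_add_distrib, hysΔ.2, ← Finset.mul_sum, hsum, mul_zero, add_zero]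
    · show A.mulVec (fun j => ys j + c * z j) i ≤ v
      rw [mulVec_add_smul]
      by_cases hi : A.mulVec ys i = v
      · rw [hzA i hi, mul_zero, add_zero, hi]
      · have := hcabs (A.mulVec z i)
        have := hbd2 i hi
        linarith
  have hyp := hmem ε (abs_of_pos hεp)
  have hym := hmem (-ε) (by rw [abs_neg, abs_of_pos hεp])
  have hseg : ys ∈ openSegment ℝ (fun j => ys j + (-ε) * z j) (fun j => ys j + ε * z j) := by
    refine ⟨1/2, 1/2, one_half_pos, one_half_pos, by norm_num, ?_⟩
    funext j
    simp only [Pi.add_apply, Pi.smul_apply, smul_eq_mul]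
    ring
  have heq := hext hyp hym (by rw [openSegment_symm]; exact hseg)
  have hcontra : ys j0 + ε * z j0 = ys j0 := congrFun heq j0
  have hz0 : ε * z j0 = 0 := by linarith
  exact hj0 ((mul_eq_zero.1 hz0).resolve_left (ne_of_gt hεp))

lemma perturb_row (A : Matrix (Fin m) (Fin n) ℝ) {v : ℝ} (hv : v ≠ 0)
    {ys : Fin n → ℝ} (hys : ys ∈ stdSimplex ℝ (Fin n)) (hysle : ∀ i, A.mulVec ys i ≤ v)
    {xs : Fin m → ℝ}
    (hxs : xs ∈ Set.extremePoints ℝ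
      {x | x ∈ stdSimplex ℝ (Fin m) ∧ ∀ j, v ≤ vecMul x A j})
    (z : Fin m → ℝ) (hzsupp : ∀ i, xs i = 0 → z i = 0)
    (hzA : ∀ j, vecMul xs A j = v → vecMul z A j = 0) : z = 0 := by
  classical
  obtain ⟨hxsX, hext⟩ := hxs
  obtain ⟨hxsΔ, hxsge⟩ := hxsX
  by_contra hz
  obtain ⟨i0, hi0⟩ : ∃ i0, z i0 ≠ 0 := by
    by_contra hc; push_neg at hc; exact hz (funext hc)
  have hpay : payoff A xs ys = v :=
    le_antisymm (payoff_le_left hxsΔ hysle) (le_payoff_right hys hxsge)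
  have hJslack : ∀ j, ys j ≠ 0 → vecMul xs A j = v := by
    intro j hj
    by_contra hne
    have hgt : v < vecMul xs A j := lt_of_le_of_ne (hxsge j) (Ne.symm hne)
    have hstrict : v < payoff A xs ys := by
      rw [payoff_eq_sum_right]
      have h1 : ∀ j', j' ∈ Finset.univ → v * ys j' ≤ vecMul xs A j' * ys j' :=
        fun j' _ => mul_le_mul_of_nonneg_right (hxsge j') (hys.1 j')
      have h2 : v * ys j < vecMul xs A j * ys j :=
        mul_lt_mul_of_pos_right hgt (lt_of_le_of_ne (hys.1 j) (Ne.symm hj))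
      calc v = ∑ j', v * ys j' := by rw [← Finset.mul_sum, hys.2, mul_one]
      _ < ∑ j', vecMul xs A j' * ys j' :=
        Finset.sum_lt_sum h1 ⟨j, Finset.mem_univ j, h2⟩
    exact absurd hpay (ne_of_gt hstrict)
  have hIslack : ∀ i, xs i ≠ 0 → A.mulVec ys i = v := by
    intro i hi
    by_contra hne
    have hlt : A.mulVec ys i < v := lt_of_le_of_ne (hysle i) hne
    have hstrict : payoff A xs ys < v := by
      rw [payoff_eq_sum_left]
      have h1 : ∀ i', i' ∈ Finset.univ → xs i' * A.mulVec ys i' ≤ xs i' * v :=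
        fun i' _ => mul_le_mul_of_nonneg_left (hysle i') (hxsΔ.1 i')
      have h2 : xs i * A.mulVec ys i < xs i * v :=
        mul_lt_mul_of_pos_left hlt (lt_of_le_of_ne (hxsΔ.1 i) (Ne.symm hi))
      calc ∑ i', xs i' * A.mulVec ys i' < ∑ i', xs i' * v :=
        Finset.sum_lt_sum h1 ⟨i, Finset.mem_univ i, h2⟩
      _ = v := by rw [← Finset.sum_mul, hxsΔ.2, one_mul]
    exact absurd hpay (ne_of_lt hstrict)
  have hsum : ∑ i, z i = 0 := by
    have hT1 : ∑ i, A.mulVec ys i * z i = v * ∑ i, z i := by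
      rw [Finset.mul_sum]
      refine Finset.sum_congr rfl fun i _ => ?_
      by_cases hzi : z i = 0
      · rw [hzi, mul_zero, mul_zero]
      · have hxi : xs i ≠ 0 := fun h => hzi (hzsupp i h)
        rw [hIslack i hxi]
    have hT2 : ∑ i, A.mulVec ys i * z i = 0 := by
      have hswap : ∑ i, A.mulVec ys i * z i = ∑ j, ys j * vecMul z A j := by
        simp only [Matrix.vecMul, Matrix.mulVec, dotProduct, Finset.sum_mul,
          Finset.mul_sum]
        rw [Finset.sum_comm]
        exact Finset.sum_congr rfl fun i _ => Finset.sum_congr rfl fun j _ => by ring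
      rw [hswap]
      refine Finset.sum_eq_zero fun j _ => ?_
      by_cases hyj : ys j = 0
      · rw [hyj, zero_mul]
      · rw [hzA j (hJslack j hyj), mul_zero]
    rw [hT1] at hT2
    exact (mul_eq_zero.1 hT2).resolve_left hv
  obtain ⟨ε1, hε1p, hε1⟩ := exists_pos_forall_le (Finset.univ.filter fun i => xs i ≠ 0)
    (fun i => xs i / (|z i| + 1)) (by
      intro i hi
      have := (Finset.mem_filter.1 hi).2
      exact div_pos (lt_of_le_of_ne (hxsΔ.1 i) (Ne.symm this)) (by positivity))
  obtain ⟨ε2, hε2p, hε2⟩ := exists_pos_forall_le (Finset.univ.filter fun j => vecMul xs A j ≠ v)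
    (fun j => (vecMul xs A j - v) / (|vecMul z A j| + 1)) (by
      intro j hj
      have := (Finset.mem_filter.1 hj).2
      exact div_pos (sub_pos.2 (lt_of_le_of_ne (hxsge j) (Ne.symm this))) (by positivity))
  set ε : ℝ := min ε1 ε2 with hε_def
  have hεp : 0 < ε := lt_min hε1p hε2p
  have hbd : ∀ i, ε * |z i| ≤ xs i := by
    intro i
    by_cases hzi : z i = 0
    · rw [hzi]; simp [hxsΔ.1 i]
    · have hxi : xs i ≠ 0 := fun h => hzi (hzsupp i h)
      have h1 : ε ≤ xs i / (|z i| + 1) :=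
        le_trans (min_le_left _ _) (hε1 i (Finset.mem_filter.2 ⟨Finset.mem_univ _, hxi⟩))
      have h2 : ε * (|z i| + 1) ≤ xs i := (le_div_iff₀ (by positivity)).1 h1
      nlinarith [abs_nonneg (z i), hεp]
  have hbd2 : ∀ j, vecMul xs A j ≠ v → ε * |vecMul z A j| ≤ vecMul xs A j - v := by
    intro j hj
    have h1 : ε ≤ (vecMul xs A j - v) / (|vecMul z A j| + 1) :=
      le_trans (min_le_right _ _) (hε2 j (Finset.mem_filter.2 ⟨Finset.mem_univ _, hj⟩))
    have h2 : ε * (|vecMul z A j| + 1) ≤ vecMul xs A j - v := (le_div_iff₀ (by positivity)).1 h1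
    nlinarith [abs_nonneg (vecMul z A j), hεp]
  have hmem : ∀ c : ℝ, |c| = ε →
      (fun i => xs i + c * z i) ∈ {x | x ∈ stdSimplex ℝ (Fin m) ∧ ∀ j, v ≤ vecMul x A j} := by
    intro c hc
    have hcabs : ∀ t : ℝ, c * t ≤ ε * |t| := by
      intro t
      calc c * t ≤ |c * t| := le_abs_self _
      _ = |c| * |t| := abs_mul c t
      _ = ε * |t| := by rw [hc]
    refine ⟨⟨fun i => ?_, ?_⟩, fun j => ?_⟩
    · show (0:ℝ) ≤ xs i + c * z i
      have := hcabs (-z i)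
      have h2 : ε * |(-z i)| = ε * |z i| := by rw [abs_neg]
      have h3 : c * (-z i) ≤ ε * |z i| := h2 ▸ this
      have := hbd i
      nlinarith
    · show ∑ i, (xs i + c * z i) = 1
      rw [Finset.sum_add_distrib, hxsΔ.2, ← Finset.mul_sum, hsum, mul_zero, add_zero]
    · show v ≤ vecMul (fun i => xs i + c * z i) A j
      rw [vecMul_add_smul]
      by_cases hj : vecMul xs A j = v
      · rw [hzA j hj, mul_zero, add_zero, hj]
      · have := hcabs (-vecMul z A j)
        have h2 : ε * |(-vecMul z A j)| = ε * |vecMul z A j| := by rw [abs_neg]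
        have h3 : c * (-vecMul z A j) ≤ ε * |vecMul z A j| := h2 ▸ this
        have := hbd2 j hj
        nlinarith
  have hyp := hmem ε (abs_of_pos hεp)
  have hym := hmem (-ε) (by rw [abs_neg, abs_of_pos hεp])
  have hseg : xs ∈ openSegment ℝ (fun i => xs i + (-ε) * z i) (fun i => xs i + ε * z i) := by
    refine ⟨1/2, 1/2, one_half_pos, one_half_pos, by norm_num, ?_⟩
    funext i
    simp only [Pi.add_apply, Pi.smul_apply, smul_eq_mul]
    ring
  have heq := hext hyp hym (by rw [openSegment_symm]; exact hseg)
  have hcontra : xs i0 + ε * z i0 = xs i0 := congrFun heq i0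
  have hz0 : ε * z i0 = 0 := by linarith
  exact hi0 ((mul_eq_zero.1 hz0).resolve_left (ne_of_gt hεp))

end Perturb

open Submodule in
lemma ext_lemma {N : ℕ} {V : Type*} [AddCommGroup V] [Module ℝ V] [FiniteDimensional ℝ V]
    (φ : Fin N → V) (J Jb : Finset (Fin N)) (hJJb : J ⊆ Jb)
    (hind : LinearIndependent ℝ (fun j : {x // x ∈ J} => φ j.1)) :
    ∃ J₁ : Finset (Fin N), J ⊆ J₁ ∧ J₁ ⊆ Jb ∧
      LinearIndependent ℝ (fun j : {x // x ∈ J₁} => φ j.1) ∧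
      (∀ j ∈ Jb, φ j ∈ span ℝ (φ '' (J₁ : Set (Fin N)))) ∧
      J₁.card = Module.finrank ℝ (span ℝ (φ '' (Jb : Set (Fin N)))) := by
  classical
  have hs0 : LinearIndependent ℝ ((↑) : (φ '' (J : Set (Fin N))) → V) := by
    have := ((linearIndepOn_id_range_iff hind.injective).mpr hind :
      LinearIndependent ℝ ((↑) : Set.range (fun j : {x // x ∈ J} => φ j.1) → V))
    have hre : Set.range (fun j : {x // x ∈ J} => φ j.1) = φ '' (J : Set (Fin N)) := by
      ext w
      simp [Set.mem_range, Set.mem_image]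
    rwa [hre] at this
  have hsub : (J : Set (Fin N)) ⊆ (Jb : Set (Fin N)) := Finset.coe_subset.2 hJJb
  obtain ⟨b, hbt, hsb, htb, hbind⟩ :=
    exists_linearIndepOn_id_extension hs0 (Set.image_mono hsub)
  have hbfin : b.Finite := LinearIndependent.setFinite hbind
  -- choice of preimages, preferring elements of J
  have hchoice : ∀ w ∈ b, ∃ j, (j ∈ Jb ∧ φ j = w) ∧ (w ∈ φ '' (J : Set (Fin N)) → j ∈ J) := by
    intro w hw
    by_cases hwJ : w ∈ φ '' (J : Set (Fin N))
    · obtain ⟨j, hj, rfl⟩ := hwJ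
      exact ⟨j, ⟨hJJb hj, rfl⟩, fun _ => hj⟩
    · obtain ⟨j, hj, rfl⟩ := hbt hw
      exact ⟨j, ⟨hj, rfl⟩, fun h => absurd h hwJ⟩
  set bf := hbfin.toFinset with hbf_def
  have hbfb : ∀ w : {x // x ∈ bf}, w.1 ∈ b := fun w => hbfin.mem_toFinset.1 w.2
  set pick : {x // x ∈ bf} → Fin N := fun w => (hchoice w.1 (hbfb w)).choose with hpick_def
  have hpick1 : ∀ w, pick w ∈ Jb ∧ φ (pick w) = w.1 :=
    fun w => (hchoice w.1 (hbfb w)).choose_spec.1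
  have hpick2 : ∀ w, w.1 ∈ φ '' (J : Set (Fin N)) → pick w ∈ J :=
    fun w => (hchoice w.1 (hbfb w)).choose_spec.2
  set J₁ : Finset (Fin N) := J ∪ bf.attach.image pick with hJ₁_def
  have hJJ₁ : J ⊆ J₁ := Finset.subset_union_left
  have hJ₁Jb : J₁ ⊆ Jb := by
    intro j hj
    rcases Finset.mem_union.1 hj with h | h
    · exact hJJb h
    · obtain ⟨w, _, rfl⟩ := Finset.mem_image.1 h
      exact (hpick1 w).1
  have himg : φ '' (J₁ : Set (Fin N)) = b := by
    apply Set.Subset.antisymm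
    · rintro w ⟨j, hj, rfl⟩
      rcases Finset.mem_union.1 (by exact_mod_cast hj) with h | h
      · exact hsb ⟨j, h, rfl⟩
      · obtain ⟨w', _, rfl⟩ := Finset.mem_image.1 h
        rw [(hpick1 w').2]
        exact hbfb w'
    · intro w hw
      have hwbf : w ∈ bf := hbfin.mem_toFinset.2 hw
      refine ⟨pick ⟨w, hwbf⟩, ?_, (hpick1 ⟨w, hwbf⟩).2⟩
      exact Finset.mem_coe.2 (Finset.mem_union_right _
        (Finset.mem_image.2 ⟨⟨w, hwbf⟩, Finset.mem_attach _ _, rfl⟩))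
  have hinjJ : ∀ j1 ∈ J, ∀ j2 ∈ J, φ j1 = φ j2 → j1 = j2 := by
    intro j1 h1 j2 h2 he
    have := hind.injective (a₁ := ⟨j1, h1⟩) (a₂ := ⟨j2, h2⟩) (by simpa using he)
    exact congrArg Subtype.val this
  have hinj : ∀ j1 ∈ J₁, ∀ j2 ∈ J₁, φ j1 = φ j2 → j1 = j2 := by
    have key : ∀ j ∈ J₁, φ j ∈ φ '' (J : Set (Fin N)) → j ∈ J := by
      intro j hj hφj
      rcases Finset.mem_union.1 hj with h | h
      · exact h
      · obtain ⟨w, _, rfl⟩ := Finset.mem_image.1 h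
        exact hpick2 w ((hpick1 w).2 ▸ hφj)
    intro j1 h1 j2 h2 he
    rcases Finset.mem_union.1 h1 with ha | ha <;> rcases Finset.mem_union.1 h2 with hb | hb
    · exact hinjJ _ ha _ hb he
    · obtain ⟨w, _, rfl⟩ := Finset.mem_image.1 hb
      have hw : (w : V) ∈ φ '' (J : Set (Fin N)) := by
        rw [← (hpick1 w).2, ← he]; exact ⟨j1, Finset.mem_coe.2 ha, rfl⟩
      exact hinjJ _ ha _ (hpick2 w hw) he
    · obtain ⟨w, _, rfl⟩ := Finset.mem_image.1 ha
      have hw : (w : V) ∈ φ '' (J : Set (Fin N)) := by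
        rw [← (hpick1 w).2, he]; exact ⟨j2, Finset.mem_coe.2 hb, rfl⟩
      exact hinjJ _ (hpick2 w hw) _ hb he
    · obtain ⟨w1, _, rfl⟩ := Finset.mem_image.1 ha
      obtain ⟨w2, _, rfl⟩ := Finset.mem_image.1 hb
      have : w1 = w2 := Subtype.ext (by rw [← (hpick1 w1).2, ← (hpick1 w2).2, he])
      rw [this]
  have hindJ₁ : LinearIndependent ℝ (fun j : {x // x ∈ J₁} => φ j.1) := by
    set e : {x // x ∈ J₁} → b := fun j => ⟨φ j.1, by rw [← himg]; exact ⟨j.1, by exact_mod_cast j.2, rfl⟩⟩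
      with he_def
    have heinj : Function.Injective e := by
      intro j1 j2 h
      exact Subtype.ext (hinj _ j1.2 _ j2.2 (congrArg Subtype.val h))
    exact LinearIndependent.comp hbind e heinj
  have hspanb : span ℝ (φ '' (J₁ : Set (Fin N))) = span ℝ (φ '' (Jb : Set (Fin N))) := by
    rw [himg]
    exact le_antisymm (span_le.2 (hbt.trans subset_span)) (span_le.2 htb)
  refine ⟨J₁, hJJ₁, hJ₁Jb, hindJ₁, ?_, ?_⟩
  · intro j hj
    rw [hspanb]
    exact subset_span ⟨j, by exact_mod_cast hj, rfl⟩
  · have hrange : Set.range (fun j : {x // x ∈ J₁} => φ j.1) = φ '' (J₁ : Set (Fin N)) := by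
      ext w; simp [Set.mem_range, Set.mem_image]
    have h2 := finrank_span_eq_card hindJ₁
    rw [hrange, hspanb] at h2
    exact (Fintype.card_coe J₁).symm.trans h2.symm

section Minimax
variable {m n : ℕ}

lemma alt0 (hm : 0 < m) (hn : 0 < n) (A : Matrix (Fin m) (Fin n) ℝ) :
    (∃ y ∈ stdSimplex ℝ (Fin n), ∀ i, A.mulVec y i ≤ 0) ∨
    (∃ x ∈ stdSimplex ℝ (Fin m), ∀ j, 0 < vecMul x A j) := by
  by_cases h : ∃ y ∈ stdSimplex ℝ (Fin n), ∀ i, A.mulVec y i ≤ 0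
  · exact Or.inl h
  right
  push_neg at h
  set s : Set (Fin m → ℝ) := {d | ∀ i, d i ≤ 0} with hs_def
  set t : Set (Fin m → ℝ) := A.mulVecLin '' stdSimplex ℝ (Fin n) with ht_def
  have hs1 : Convex ℝ s := by
    intro d hd d' hd' a b ha hb hab i
    have h1 := hd i; have h2 := hd' i
    have : a * d i + b * d' i ≤ 0 := by nlinarith
    simpa using this
  have hs2 : IsClosed s := by
    have : s = ⋂ i, {d : Fin m → ℝ | d i ≤ 0} := by
      ext d; simp [hs_def, Set.mem_iInter]
    rw [this]
    exact isClosed_iInter fun i => isClosed_le (continuous_apply i) continuous_const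
  have ht1 : Convex ℝ t := (convex_stdSimplex ℝ _).linear_image A.mulVecLin
  have ht2 : IsCompact t := (isCompact_stdSimplex ℝ _).image A.mulVecLin.continuous_of_finiteDimensional
  have hdisj : Disjoint s t := by
    rw [Set.disjoint_left]
    rintro d hd ⟨y, hy, rfl⟩
    exact absurd (fun i => hd i) (by simpa using h y hy)
  obtain ⟨f, u, v, hfs, huv, hft⟩ := geometric_hahn_banach_closed_compact hs1 hs2 ht1 ht2 hdisj
  have h0s : (0 : Fin m → ℝ) ∈ s := fun i => le_refl 0
  have hu0 : 0 < u := by have := hfs 0 h0s; simpa using this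
  have hfs' : ∀ d ∈ s, f d ≤ 0 := by
    intro d hd
    by_contra hpos
    push_neg at hpos
    set r : ℝ := u / f d + 1 with hr_def
    have hr : 0 ≤ r := by positivity
    have hrs : r • d ∈ s := fun i => by
      have : r * d i ≤ 0 := mul_nonpos_iff.2 (Or.inl ⟨hr, hd i⟩)
      simpa using this
    have hne : f d ≠ 0 := ne_of_gt hpos
    have h1 : f (r • d) = u + f d := by
      rw [f.map_smul, smul_eq_mul, hr_def]
      field_simp
    have h2 := hfs _ hrs
    rw [h1] at h2
    linarith
  set xv : Fin m → ℝ := fun i => f (Pi.single i 1) with hxv_def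
  have hx0 : ∀ i, 0 ≤ xv i := by
    intro i
    have hmem : (-(Pi.single i 1) : Fin m → ℝ) ∈ s := by
      intro i'
      simp only [Pi.neg_apply, neg_nonpos]
      by_cases hii : i = i' <;> simp [Pi.single_apply, hii]
    have := hfs' _ hmem
    simp only [map_neg, neg_nonpos] at this
    exact this
  have hrep : ∀ b : Fin m → ℝ, f b = ∑ i, b i * xv i := by
    intro b
    have hb : b = ∑ i, Pi.single i (b i) := by
      funext k
      rw [Finset.sum_apply]
      simp [Pi.single_apply]
    calc f b = f (∑ i, Pi.single i (b i)) := by rw [← hb]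
    _ = ∑ i, f (Pi.single i (b i)) := map_sum f _ _
    _ = ∑ i, b i * xv i := Finset.sum_congr rfl fun i _ => by
        have hsingle : Pi.single i (b i) = b i • (Pi.single i (1:ℝ) : Fin m → ℝ) := by
          funext k; by_cases hk : k = i <;> simp [Pi.single_apply, hk]
        rw [hsingle, f.map_smul, smul_eq_mul]
  have hpos : ∀ y ∈ stdSimplex ℝ (Fin n), u < ∑ i, A.mulVec y i * xv i := by
    intro y hy
    have := hft _ ⟨y, hy, rfl⟩
    rw [show (A.mulVecLin y : Fin m → ℝ) = A.mulVec y from rfl] at this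
    rw [hrep] at this
    linarith
  have hcol : ∀ j, u < ∑ i, A i j * xv i := by
    intro j
    have := hpos (Pi.single j 1) (single_mem_stdSimplex ℝ j)
    have hAv : ∀ i, A.mulVec (Pi.single j 1) i = A i j := by
      intro i; simp [Matrix.mulVec, dotProduct, Pi.single_apply]
    calc u < ∑ i, A.mulVec (Pi.single j 1) i * xv i := this
    _ = ∑ i, A i j * xv i := by
      exact Finset.sum_congr rfl fun i _ => by rw [hAv]
  set S : ℝ := ∑ i, xv i with hS_def
  have hSpos : 0 < S := by
    rcases lt_or_ge 0 S with h' | h'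
    · exact h'
    have hS0 : S = 0 := le_antisymm h' (Finset.sum_nonneg fun i _ => hx0 i)
    have hall : ∀ i ∈ Finset.univ, xv i = 0 :=
      (Finset.sum_eq_zero_iff_of_nonneg fun i _ => hx0 i).1 hS0
    have := hcol ⟨0, hn⟩
    rw [Finset.sum_congr rfl (fun i _ => by rw [hall i (mem_univ i), mul_zero])] at this
    simp at this
    linarith
  refine ⟨S⁻¹ • xv, ⟨fun i => mul_nonneg (by positivity) (hx0 i), ?_⟩, ?_⟩
  · simp only [Pi.smul_apply, smul_eq_mul, ← Finset.mul_sum, ← hS_def]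
    field_simp
  · intro j
    have : vecMul (S⁻¹ • xv) A j = S⁻¹ * ∑ i, A i j * xv i := by
      simp only [Matrix.vecMul, dotProduct, Pi.smul_apply, smul_eq_mul, Finset.mul_sum]
      exact Finset.sum_congr rfl fun i _ => by ring
    rw [this]
    exact mul_pos (by positivity) (lt_trans hu0 (hcol j))

lemma alt (hm : 0 < m) (hn : 0 < n) (A : Matrix (Fin m) (Fin n) ℝ) (c : ℝ) :
    (∃ y ∈ stdSimplex ℝ (Fin n), ∀ i, A.mulVec y i ≤ c) ∨
    (∃ x ∈ stdSimplex ℝ (Fin m), ∀ j, c < vecMul x A j) := by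
  rcases alt0 hm hn (Matrix.of fun i j => A i j - c) with ⟨y, hy, h⟩ | ⟨x, hx, h⟩
  · refine Or.inl ⟨y, hy, fun i => ?_⟩
    have := h i
    have hcomp : (Matrix.of fun i j => A i j - c).mulVec y i = A.mulVec y i - c := by
      simp only [Matrix.mulVec, dotProduct, Matrix.of_apply, sub_mul]
      rw [Finset.sum_sub_distrib, ← Finset.mul_sum, hy.2, mul_one]
    linarith [hcomp ▸ this]
  · refine Or.inr ⟨x, hx, fun j => ?_⟩
    have := h j
    have hcomp : vecMul x (Matrix.of fun i j => A i j - c) j = vecMul x A j - c := by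
      simp only [Matrix.vecMul, dotProduct, Matrix.of_apply, mul_sub]
      rw [Finset.sum_sub_distrib, ← Finset.sum_mul, hx.2, one_mul]
    linarith [hcomp ▸ this]

lemma exists_guarantees (hm : 0 < m) (hn : 0 < n) (A : Matrix (Fin m) (Fin n) ℝ) :
    ∃ (v : ℝ) (x0 : Fin m → ℝ) (y0 : Fin n → ℝ),
      x0 ∈ stdSimplex ℝ (Fin m) ∧ y0 ∈ stdSimplex ℝ (Fin n) ∧
      (∀ j, v ≤ vecMul x0 A j) ∧ (∀ i, A.mulVec y0 i ≤ v) := by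
  haveI : Nonempty (Fin m) := ⟨⟨0, hm⟩⟩
  haveI : Nonempty (Fin n) := ⟨⟨0, hn⟩⟩
  set h : (Fin n → ℝ) → ℝ := fun y => Finset.univ.sup' Finset.univ_nonempty (A.mulVec y)
    with hh_def
  have hcont : Continuous h := by
    apply Continuous.finset_sup'_apply
    intro i _
    show Continuous fun y : Fin n → ℝ => A.mulVec y i
    simp only [Matrix.mulVec, dotProduct]
    exact continuous_finset_sum _ fun j _ => (continuous_const.mul (continuous_apply j))
  obtain ⟨y0, hy0mem, hy0min⟩ := (isCompact_stdSimplex ℝ (Fin n)).exists_isMinOn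
    ⟨Pi.single ⟨0, hn⟩ 1, single_mem_stdSimplex ℝ _⟩ hcont.continuousOn
  set g : (Fin m → ℝ) → ℝ := fun x => Finset.univ.inf' Finset.univ_nonempty (vecMul x A)
    with hg_def
  have hgcont : Continuous g := by
    apply Continuous.finset_inf'_apply
    intro j _
    show Continuous fun x : Fin m → ℝ => vecMul x A j
    simp only [Matrix.vecMul, dotProduct]
    exact continuous_finset_sum _ fun i _ => ((continuous_apply i).mul continuous_const)
  obtain ⟨x0, hx0mem, hx0max⟩ := (isCompact_stdSimplex ℝ (Fin m)).exists_isMaxOn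
    ⟨Pi.single ⟨0, hm⟩ 1, single_mem_stdSimplex ℝ _⟩ hgcont.continuousOn
  set v : ℝ := h y0 with hv_def
  have hvg : v ≤ g x0 := by
    refine le_of_forall_lt fun c hc => ?_
    rcases alt hm hn A c with ⟨y, hy, hyle⟩ | ⟨x, hx, hxgt⟩
    · exfalso
      have h1 : h y ≤ c := Finset.sup'_le _ _ fun i _ => hyle i
      have h2 : v ≤ h y := hy0min hy
      linarith
    · have h1 : c < g x := (Finset.lt_inf'_iff _).2 fun j _ => hxgt j
      exact lt_of_lt_of_le h1 (hx0max hx)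
  refine ⟨v, x0, y0, hx0mem, hy0mem, fun j => ?_, fun i => ?_⟩
  · exact le_trans hvg (Finset.inf'_le _ (mem_univ j))
  · exact Finset.le_sup' _ (mem_univ i)

end Minimax

section Kernel
open Submodule

lemma exists_kernel {m n : ℕ} (hm : 0 < m) (hn : 0 < n) (A : Matrix (Fin m) (Fin n) ℝ)
    (hval : matrixVal A ≠ 0) :
    ∃ (k : ℕ), 0 < k ∧ ∃ (ρ : Fin k → Fin m) (σ : Fin k → Fin n),
      Function.Injective ρ ∧ Function.Injective σ ∧
      IsUnit (A.submatrix ρ σ).det ∧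
      matrixVal (A.submatrix ρ σ) = matrixVal A ∧
      matrixVal A = (∑ i, ∑ j, (A.submatrix ρ σ)⁻¹ i j)⁻¹ := by
  classical
  obtain ⟨v, x0, y0, hx0, hy0, hgx, hgy⟩ := exists_guarantees hm hn A
  have hveq : matrixVal A = v := matrixVal_eq hm hx0 hy0 hgx hgy
  have hv : v ≠ 0 := hveq ▸ hval
  set X : Set (Fin m → ℝ) := {x | x ∈ stdSimplex ℝ (Fin m) ∧ ∀ j, v ≤ vecMul x A j} with hX_def
  set Y : Set (Fin n → ℝ) := {y | y ∈ stdSimplex ℝ (Fin n) ∧ ∀ i, A.mulVec y i ≤ v} with hY_def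
  have hXclosed : IsClosed X := by
    have hXeq : X = stdSimplex ℝ (Fin m) ∩ ⋂ j, {x | v ≤ vecMul x A j} := by
      ext x; simp [hX_def, Set.mem_iInter]
    rw [hXeq]
    refine (isClosed_stdSimplex ℝ _).inter (isClosed_iInter fun j =>
      isClosed_le continuous_const ?_)
    show Continuous fun x : Fin m → ℝ => vecMul x A j
    simp only [Matrix.vecMul, dotProduct]
    exact continuous_finset_sum _ fun i _ => ((continuous_apply i).mul continuous_const)
  have hYclosed : IsClosed Y := by
    have hYeq : Y = stdSimplex ℝ (Fin n) ∩ ⋂ i, {y | A.mulVec y i ≤ v} := by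
      ext y; simp [hY_def, Set.mem_iInter]
    rw [hYeq]
    refine (isClosed_stdSimplex ℝ _).inter (isClosed_iInter fun i =>
      isClosed_le ?_ continuous_const)
    show Continuous fun y : Fin n → ℝ => A.mulVec y i
    simp only [Matrix.mulVec, dotProduct]
    exact continuous_finset_sum _ fun j _ => (continuous_const.mul (continuous_apply j))
  have hXcomp : IsCompact X :=
    (isCompact_stdSimplex ℝ _).of_isClosed_subset hXclosed (fun x hx => hx.1)
  have hYcomp : IsCompact Y :=
    (isCompact_stdSimplex ℝ _).of_isClosed_subset hYclosed (fun y hy => hy.1)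
  obtain ⟨xs, hxs⟩ := hXcomp.extremePoints_nonempty ⟨x0, hx0, hgx⟩
  obtain ⟨ys, hys⟩ := hYcomp.extremePoints_nonempty ⟨y0, hy0, hgy⟩
  have hxsX : xs ∈ stdSimplex ℝ (Fin m) := hxs.1.1
  have hxsge : ∀ j, v ≤ vecMul xs A j := hxs.1.2
  have hysY : ys ∈ stdSimplex ℝ (Fin n) := hys.1.1
  have hysle : ∀ i, A.mulVec ys i ≤ v := hys.1.2
  set Isupp : Finset (Fin m) := Finset.univ.filter (fun i => xs i ≠ 0) with hIsupp_def
  set Jsupp : Finset (Fin n) := Finset.univ.filter (fun j => ys j ≠ 0) with hJsupp_def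
  set Ibar : Finset (Fin m) := Finset.univ.filter (fun i => A.mulVec ys i = v) with hIbar_def
  set Jbar : Finset (Fin n) := Finset.univ.filter (fun j => vecMul xs A j = v) with hJbar_def
  have hIsuppIbar : Isupp ⊆ Ibar := by
    intro i hi
    rw [hIsupp_def, Finset.mem_filter] at hi
    rw [hIbar_def, Finset.mem_filter]
    exact ⟨Finset.mem_univ _, slack_row hxsX hxsge hysY hysle i hi.2⟩
  have hJsuppJbar : Jsupp ⊆ Jbar := by
    intro j hj
    rw [hJsupp_def, Finset.mem_filter] at hj
    rw [hJbar_def, Finset.mem_filter]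
    exact ⟨Finset.mem_univ _, slack_col hxsX hxsge hysY hysle j hj.2⟩
  -- the two vector families
  set φc : Fin n → ({i // i ∈ Ibar} → ℝ) := fun j => fun i => A i.1 j with hφc_def
  set ψ : Fin m → ({j // j ∈ Jbar} → ℝ) := fun i => fun j => A i j.1 with hψ_def
  -- column independence over the support of ys
  have hcolind : LinearIndependent ℝ (fun j : {x // x ∈ Jsupp} => φc j.1) := by
    rw [Fintype.linearIndependent_iff]
    intro g hg
    set z : Fin n → ℝ := fun j => if h : j ∈ Jsupp then g ⟨j, h⟩ else 0 with hz_def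
    have hzsupp : ∀ j, ys j = 0 → z j = 0 := by
      intro j hyj
      have : j ∉ Jsupp := by rw [hJsupp_def, Finset.mem_filter]; tauto
      simp [hz_def, this]
    have hzA : ∀ i, A.mulVec ys i = v → A.mulVec z i = 0 := by
      intro i hi
      have himem : i ∈ Ibar := by rw [hIbar_def, Finset.mem_filter]; exact ⟨Finset.mem_univ _, hi⟩
      have h0 : A.mulVec z i = ∑ j, A i j * z j := rfl
      have h1 : A.mulVec z i = ∑ j ∈ Jsupp, A i j * z j := by
        rw [h0]
        refine (Finset.sum_subset (Finset.subset_univ _) fun j _ hj => ?_).symm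
        rw [hz_def]; simp [hj]
      have h2 : ∑ j ∈ Jsupp, A i j * z j = ∑ j : {x // x ∈ Jsupp}, g j * A i j.1 := by
        rw [← Finset.sum_coe_sort Jsupp (fun j => A i j * z j)]
        refine Finset.sum_congr rfl fun j _ => ?_
        rw [hz_def]; simp [j.2]; ring
      have h3 := congrFun hg ⟨i, himem⟩
      rw [Finset.sum_apply] at h3
      simp only [Pi.zero_apply] at h3
      have h4 : ∑ j : {x // x ∈ Jsupp}, g j * A i j.1 = 0 := by
        rw [← h3]
        exact Finset.sum_congr rfl fun j _ => rfl
      rw [h1, h2, h4]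
    have hzero := perturb_col A hv hxsX hxsge hys z hzsupp hzA
    intro j
    have := congrFun hzero j.1
    rw [hz_def] at this
    simpa [j.2] using this
  -- row independence over the support of xs
  have hrowind : LinearIndependent ℝ (fun i : {x // x ∈ Isupp} => ψ i.1) := by
    rw [Fintype.linearIndependent_iff]
    intro g hg
    set z : Fin m → ℝ := fun i => if h : i ∈ Isupp then g ⟨i, h⟩ else 0 with hz_def
    have hzsupp : ∀ i, xs i = 0 → z i = 0 := by
      intro i hxi
      have : i ∉ Isupp := by rw [hIsupp_def, Finset.mem_filter]; tauto
      simp [hz_def, this]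
    have hzA : ∀ j, vecMul xs A j = v → vecMul z A j = 0 := by
      intro j hj
      have hjmem : j ∈ Jbar := by rw [hJbar_def, Finset.mem_filter]; exact ⟨Finset.mem_univ _, hj⟩
      have h0 : vecMul z A j = ∑ i, z i * A i j := rfl
      have h1 : vecMul z A j = ∑ i ∈ Isupp, z i * A i j := by
        rw [h0]
        refine (Finset.sum_subset (Finset.subset_univ _) fun i _ hi => ?_).symm
        rw [hz_def]; simp [hi]
      have h2 : ∑ i ∈ Isupp, z i * A i j = ∑ i : {x // x ∈ Isupp}, g i * A i.1 j := by
        rw [← Finset.sum_coe_sort Isupp (fun i => z i * A i j)]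
        refine Finset.sum_congr rfl fun i _ => ?_
        rw [hz_def]; simp [i.2]
      have h3 := congrFun hg ⟨j, hjmem⟩
      rw [Finset.sum_apply] at h3
      simp only [Pi.zero_apply] at h3
      have h4 : ∑ i : {x // x ∈ Isupp}, g i * A i.1 j = 0 := by
        rw [← h3]
        exact Finset.sum_congr rfl fun i _ => rfl
      rw [h1, h2, h4]
    have hzero := perturb_row A hv hysY hysle hxs z hzsupp hzA
    intro i
    have := congrFun hzero i.1
    rw [hz_def] at this
    simpa [i.2] using this
  -- extend to bases
  obtain ⟨J₁, hJJ₁, hJ₁Jb, hindJ₁, hspanJ₁, hcardJ₁⟩ := ext_lemma φc Jsupp Jbar hJsuppJbar hcolind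
  obtain ⟨I₁, hII₁, hI₁Ib, hindI₁, hspanI₁, hcardI₁⟩ := ext_lemma ψ Isupp Ibar hIsuppIbar hrowind
  -- equal cardinalities via row rank = column rank
  set B : Matrix {i // i ∈ Ibar} {j // j ∈ Jbar} ℝ := Matrix.of (fun i j => A i.1 j.1) with hB_def
  have hBcol : φc '' (Jbar : Set (Fin n)) = Set.range Bᵀ := by
    ext w
    constructor
    · rintro ⟨j, hj, rfl⟩
      exact ⟨⟨j, hj⟩, rfl⟩
    · rintro ⟨j, rfl⟩
      exact ⟨j.1, Finset.mem_coe.2 j.2, rfl⟩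
  have hBrow : ψ '' (Ibar : Set (Fin m)) = Set.range B := by
    ext w
    constructor
    · rintro ⟨i, hi, rfl⟩
      exact ⟨⟨i, hi⟩, rfl⟩
    · rintro ⟨i, rfl⟩
      exact ⟨i.1, Finset.mem_coe.2 i.2, rfl⟩
  have hcards : I₁.card = J₁.card := by
    rw [hcardJ₁, hcardI₁, hBcol, hBrow]
    exact (B.rank_eq_finrank_span_row).symm.trans ((B.rank_transpose).symm.trans
      Bᵀ.rank_eq_finrank_span_row)
  set k : ℕ := J₁.card with hk_def
  have hkpos : 0 < k := by
    obtain ⟨j, hj⟩ : ∃ j, ys j ≠ 0 := by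
      by_contra hc
      push_neg at hc
      have : (1:ℝ) = 0 := by rw [← hysY.2]; exact Finset.sum_eq_zero fun j _ => hc j
      norm_num at this
    have hjJ : j ∈ J₁ := hJJ₁ (by rw [hJsupp_def, Finset.mem_filter]; exact ⟨Finset.mem_univ _, hj⟩)
    exact Finset.card_pos.2 ⟨j, hjJ⟩
  -- enumerations
  set eI := I₁.orderIsoOfFin hcards with heI_def
  set eJ := J₁.orderIsoOfFin rfl with heJ_def
  set ρ : Fin k → Fin m := fun t => (eI t : Fin m) with hρ_def
  set σ : Fin k → Fin n := fun t => (eJ t : Fin n) with hσ_def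
  have hρinj : Function.Injective ρ := fun a b h => eI.injective (Subtype.ext h)
  have hσinj : Function.Injective σ := fun a b h => eJ.injective (Subtype.ext h)
  have hρmem : ∀ t, ρ t ∈ I₁ := fun t => (eI t).2
  have hσmem : ∀ t, σ t ∈ J₁ := fun t => (eJ t).2
  have hρsurj : ∀ i ∈ I₁, ∃ t, ρ t = i := fun i hi =>
    ⟨eI.symm ⟨i, hi⟩, by rw [hρ_def]; simp⟩
  have hσsurj : ∀ j ∈ J₁, ∃ t, σ t = j := fun j hj =>
    ⟨eJ.symm ⟨j, hj⟩, by rw [hσ_def]; simp⟩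
  have hsumρ : ∀ f : Fin m → ℝ, ∑ t, f (ρ t) = ∑ i ∈ I₁, f i := by
    intro f
    rw [← Finset.sum_coe_sort I₁ f]
    exact Fintype.sum_equiv eI.toEquiv _ _ (fun t => rfl)
  have hsumσ : ∀ f : Fin n → ℝ, ∑ t, f (σ t) = ∑ j ∈ J₁, f j := by
    intro f
    rw [← Finset.sum_coe_sort J₁ f]
    exact Fintype.sum_equiv eJ.toEquiv _ _ (fun t => rfl)
  -- the kernel matrix and restricted strategies
  set Ab : Matrix (Fin k) (Fin k) ℝ := A.submatrix ρ σ with hAb_def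
  have hxb : (xs ∘ ρ) ∈ stdSimplex ℝ (Fin k) := by
    refine ⟨fun t => hxsX.1 (ρ t), ?_⟩
    show ∑ t, xs (ρ t) = 1
    rw [hsumρ xs]
    rw [Finset.sum_subset (Finset.subset_univ I₁) fun i _ hi => ?_]
    · exact hxsX.2
    · by_contra hne
      exact hi (hII₁ (by rw [hIsupp_def, Finset.mem_filter]; exact ⟨Finset.mem_univ _, hne⟩))
  have hyb : (ys ∘ σ) ∈ stdSimplex ℝ (Fin k) := by
    refine ⟨fun t => hysY.1 (σ t), ?_⟩
    show ∑ t, ys (σ t) = 1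
    rw [hsumσ ys]
    rw [Finset.sum_subset (Finset.subset_univ J₁) fun j _ hj => ?_]
    · exact hysY.2
    · by_contra hne
      exact hj (hJJ₁ (by rw [hJsupp_def, Finset.mem_filter]; exact ⟨Finset.mem_univ _, hne⟩))
  have hAyb : ∀ t, Ab.mulVec (ys ∘ σ) t = v := by
    intro t
    have h1 : Ab.mulVec (ys ∘ σ) t = ∑ s, A (ρ t) (σ s) * ys (σ s) := rfl
    have h2 : ∑ s, A (ρ t) (σ s) * ys (σ s) = ∑ j ∈ J₁, A (ρ t) j * ys j :=
      hsumσ (fun j => A (ρ t) j * ys j)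
    have h3 : ∑ j ∈ J₁, A (ρ t) j * ys j = ∑ j, A (ρ t) j * ys j := by
      refine Finset.sum_subset (Finset.subset_univ J₁) fun j _ hj => ?_
      have : ys j = 0 := by
        by_contra hne
        exact hj (hJJ₁ (by rw [hJsupp_def, Finset.mem_filter]; exact ⟨Finset.mem_univ _, hne⟩))
      rw [this, mul_zero]
    have h4 : ρ t ∈ Ibar := hI₁Ib (hρmem t)
    rw [hIbar_def, Finset.mem_filter] at h4
    rw [h1, h2, h3]
    exact h4.2
  have hxbA : ∀ s, vecMul (xs ∘ ρ) Ab s = v := by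
    intro s
    have h1 : vecMul (xs ∘ ρ) Ab s = ∑ t, xs (ρ t) * A (ρ t) (σ s) := rfl
    have h2 : ∑ t, xs (ρ t) * A (ρ t) (σ s) = ∑ i ∈ I₁, xs i * A i (σ s) :=
      hsumρ (fun i => xs i * A i (σ s))
    have h3 : ∑ i ∈ I₁, xs i * A i (σ s) = ∑ i, xs i * A i (σ s) := by
      refine Finset.sum_subset (Finset.subset_univ I₁) fun i _ hi => ?_
      have : xs i = 0 := by
        by_contra hne
        exact hi (hII₁ (by rw [hIsupp_def, Finset.mem_filter]; exact ⟨Finset.mem_univ _, hne⟩))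
      rw [this, zero_mul]
    have h4 : σ s ∈ Jbar := hJ₁Jb (hσmem s)
    rw [hJbar_def, Finset.mem_filter] at h4
    rw [h1, h2, h3]
    exact h4.2
  -- invertibility
  have hdet : Ab.det ≠ 0 := by
    intro h0
    obtain ⟨w, hw0, hww⟩ := Matrix.exists_mulVec_eq_zero_iff.2 h0
    have hrow : ∀ i ∈ Ibar, ∃ c : Fin k → ℝ, ∀ j ∈ Jbar, A i j = ∑ t, c t * A (ρ t) j := by
      intro i hi
      have h1 := hspanI₁ i hi
      have h2 : ψ '' (I₁ : Set (Fin m)) = Set.range (fun t : Fin k => ψ (ρ t)) := by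
        ext w'
        constructor
        · rintro ⟨i', hi', rfl⟩
          obtain ⟨t, rfl⟩ := hρsurj i' (Finset.mem_coe.1 hi')
          exact ⟨t, rfl⟩
        · rintro ⟨t, rfl⟩
          exact ⟨ρ t, Finset.mem_coe.2 (hρmem t), rfl⟩
      rw [h2, mem_span_range_iff_exists_fun] at h1
      obtain ⟨c, hc⟩ := h1
      refine ⟨c, fun j hj => ?_⟩
      have h3 := congrFun hc ⟨j, hj⟩
      rw [Finset.sum_apply] at h3
      have h4 : ∑ t, c t * A (ρ t) j = ψ i ⟨j, hj⟩ := by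
        rw [← h3]
        exact Finset.sum_congr rfl fun t _ => rfl
      exact h4.symm
    have hdep : ∑ s : Fin k, w s • φc (σ s) = 0 := by
      funext i
      rw [Finset.sum_apply]
      obtain ⟨c, hc⟩ := hrow i.1 i.2
      have h5 : ∀ s : Fin k, (w s • φc (σ s)) i = w s * A i.1 (σ s) := fun s => rfl
      calc ∑ s, (w s • φc (σ s)) i = ∑ s, w s * A i.1 (σ s) :=
            Finset.sum_congr rfl fun s _ => h5 s
      _ = ∑ s, w s * ∑ t, c t * A (ρ t) (σ s) :=
            Finset.sum_congr rfl fun s _ => by rw [← hc (σ s) (hJ₁Jb (hσmem s))]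
      _ = ∑ s, ∑ t, c t * (A (ρ t) (σ s) * w s) :=
            Finset.sum_congr rfl fun s _ => by rw [Finset.mul_sum]; exact Finset.sum_congr rfl fun t _ => by ring
      _ = ∑ t, ∑ s, c t * (A (ρ t) (σ s) * w s) := Finset.sum_comm
      _ = ∑ t, c t * Ab.mulVec w t := by
            refine Finset.sum_congr rfl fun t _ => ?_
            show ∑ s, c t * (A (ρ t) (σ s) * w s) = c t * Ab.mulVec w t
            rw [← Finset.mul_sum]
            rfl
      _ = 0 := by
            refine Finset.sum_eq_zero fun t _ => ?_
            rw [congrFun hww t]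
            simp
    have hindσ : LinearIndependent ℝ (fun s : Fin k => φc (σ s)) := by
      have : (fun s : Fin k => φc (σ s)) = (fun j : {x // x ∈ J₁} => φc j.1) ∘ eJ.toEquiv := rfl
      rw [this]
      exact hindJ₁.comp eJ.toEquiv eJ.toEquiv.injective
    have := Fintype.linearIndependent_iff.1 hindσ w hdep
    exact hw0 (funext fun s => this s)
  have hunit : IsUnit Ab.det := isUnit_iff_ne_zero.2 hdet
  -- value of the kernel
  have hvalsub : matrixVal Ab = v :=
    matrixVal_eq hkpos hxb hyb (fun s => le_of_eq (hxbA s).symm) (fun t => le_of_eq (hAyb t))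
  -- the trace formula
  have hinv : (ys ∘ σ) = (Ab⁻¹).mulVec (fun _ => v) := by
    have h1 : Ab.mulVec (ys ∘ σ) = fun _ => v := funext hAyb
    calc ys ∘ σ = (1 : Matrix (Fin k) (Fin k) ℝ).mulVec (ys ∘ σ) := by rw [Matrix.one_mulVec]
    _ = (Ab⁻¹ * Ab).mulVec (ys ∘ σ) := by rw [Matrix.nonsing_inv_mul Ab hunit]
    _ = (Ab⁻¹).mulVec (Ab.mulVec (ys ∘ σ)) := by rw [← Matrix.mulVec_mulVec]
    _ = (Ab⁻¹).mulVec (fun _ => v) := by rw [h1]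
  have hsum1 : v * (∑ i, ∑ j, Ab⁻¹ i j) = 1 := by
    have h2 : ∑ s, (ys ∘ σ) s = 1 := hyb.2
    rw [hinv] at h2
    calc v * ∑ i, ∑ j, Ab⁻¹ i j = ∑ i, ∑ j, Ab⁻¹ i j * v := by
          rw [Finset.mul_sum]
          refine Finset.sum_congr rfl fun i _ => ?_
          rw [Finset.mul_sum]
          exact Finset.sum_congr rfl fun j _ => by ring
    _ = ∑ s, (Ab⁻¹).mulVec (fun _ => v) s := by
          refine Finset.sum_congr rfl fun i _ => ?_
          simp [Matrix.mulVec, dotProduct]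
    _ = 1 := h2
  have hT : (∑ i, ∑ j, Ab⁻¹ i j) = v⁻¹ :=
    mul_left_cancel₀ hv (hsum1.trans (mul_inv_cancel₀ hv).symm)
  exact ⟨k, hkpos, ρ, σ, hρinj, hσinj, hunit, by rw [hvalsub, hveq],
    by rw [hveq, hT, inv_inv]⟩

end Kernel

section Final

lemma shrink_row {k : ℕ} (hk : 0 < k) (C : Matrix (Fin (k+1)) (Fin (k+1)) ℝ)
    (hvC : matrixVal C ≠ 0) {x0 y0 : Fin (k+1) → ℝ} (hopt : IsOptimalPair C x0 y0)
    (i0 : Fin (k+1)) (hzero : x0 i0 = 0) :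
    ∃ k1, 0 < k1 ∧ k1 ≤ k ∧ ∃ (ρ1 : Fin k1 → Fin (k+1)) (σ1 : Fin k1 → Fin (k+1)),
      Function.Injective ρ1 ∧ Function.Injective σ1 ∧
      IsUnit (C.submatrix ρ1 σ1).det ∧
      matrixVal (C.submatrix ρ1 σ1) = matrixVal C ∧
      matrixVal C = (∑ i, ∑ j, (C.submatrix ρ1 σ1)⁻¹ i j)⁻¹ := by
  set B : Matrix (Fin k) (Fin (k+1)) ℝ := C.submatrix i0.succAbove id with hB_def
  set x'' : Fin k → ℝ := x0 ∘ i0.succAbove with hx''_def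
  have hx0Δ := hopt.1
  have hx'' : x'' ∈ stdSimplex ℝ (Fin k) := by
    refine ⟨fun t => hx0Δ.1 _, ?_⟩
    show ∑ t, x0 (i0.succAbove t) = 1
    have := Fin.sum_univ_succAbove x0 i0
    rw [hzero, zero_add] at this
    rw [← this]
    exact hx0Δ.2
  have hge := hopt.vecMul_ge (Nat.succ_pos k)
  have hle := hopt.mulVec_le (Nat.succ_pos k)
  have hvB : matrixVal B = matrixVal C := by
    refine matrixVal_eq hk hx'' hopt.2.1 (fun j => ?_) (fun t => ?_)
    · have hsplit : vecMul x0 C j = x0 i0 * C i0 j + ∑ t, x0 (i0.succAbove t) * C (i0.succAbove t) j :=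
        Fin.sum_univ_succAbove (fun s => x0 s * C s j) i0
      have h1 : vecMul x'' B j = ∑ t, x0 (i0.succAbove t) * C (i0.succAbove t) j := rfl
      rw [h1]
      have := hge j
      rw [hsplit, hzero, zero_mul, zero_add] at this
      exact this
    · exact hle (i0.succAbove t)
  obtain ⟨k1, hk1pos, ρ', σ', hρ', hσ', hunit', hval', hform'⟩ :=
    exists_kernel hk (Nat.succ_pos k) B (by rw [hvB]; exact hvC)
  refine ⟨k1, hk1pos, ?_, i0.succAbove ∘ ρ', σ', Fin.succAbove_right_injective.comp hρ', hσ', ?_, ?_, ?_⟩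
  · simpa using Fintype.card_le_of_injective ρ' hρ'
  · have : B.submatrix ρ' σ' = C.submatrix (i0.succAbove ∘ ρ') σ' := rfl
    rw [← this]; exact hunit'
  · have : B.submatrix ρ' σ' = C.submatrix (i0.succAbove ∘ ρ') σ' := rfl
    rw [← this, hval', hvB]
  · have : B.submatrix ρ' σ' = C.submatrix (i0.succAbove ∘ ρ') σ' := rfl
    rw [← this, ← hvB]; exact hform'

lemma shrink_col {k : ℕ} (hk : 0 < k) (C : Matrix (Fin (k+1)) (Fin (k+1)) ℝ)
    (hvC : matrixVal C ≠ 0) {x0 y0 : Fin (k+1) → ℝ} (hopt : IsOptimalPair C x0 y0)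
    (j0 : Fin (k+1)) (hzero : y0 j0 = 0) :
    ∃ k1, 0 < k1 ∧ k1 ≤ k ∧ ∃ (ρ1 : Fin k1 → Fin (k+1)) (σ1 : Fin k1 → Fin (k+1)),
      Function.Injective ρ1 ∧ Function.Injective σ1 ∧
      IsUnit (C.submatrix ρ1 σ1).det ∧
      matrixVal (C.submatrix ρ1 σ1) = matrixVal C ∧
      matrixVal C = (∑ i, ∑ j, (C.submatrix ρ1 σ1)⁻¹ i j)⁻¹ := by
  set B : Matrix (Fin (k+1)) (Fin k) ℝ := C.submatrix id j0.succAbove with hB_def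
  set y'' : Fin k → ℝ := y0 ∘ j0.succAbove with hy''_def
  have hy0Δ := hopt.2.1
  have hy'' : y'' ∈ stdSimplex ℝ (Fin k) := by
    refine ⟨fun t => hy0Δ.1 _, ?_⟩
    show ∑ t, y0 (j0.succAbove t) = 1
    have := Fin.sum_univ_succAbove y0 j0
    rw [hzero, zero_add] at this
    rw [← this]
    exact hy0Δ.2
  have hge := hopt.vecMul_ge (Nat.succ_pos k)
  have hle := hopt.mulVec_le (Nat.succ_pos k)
  have hvB : matrixVal B = matrixVal C := by
    refine matrixVal_eq (Nat.succ_pos k) hopt.1 hy'' (fun t => ?_) (fun i => ?_)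
    · exact hge (j0.succAbove t)
    · have hsplit : C.mulVec y0 i = C i j0 * y0 j0 + ∑ t, C i (j0.succAbove t) * y0 (j0.succAbove t) :=
        Fin.sum_univ_succAbove (fun s => C i s * y0 s) j0
      have h1 : B.mulVec y'' i = ∑ t, C i (j0.succAbove t) * y0 (j0.succAbove t) := rfl
      rw [h1]
      have := hle i
      rw [hsplit, hzero, mul_zero, zero_add] at this
      exact this
  obtain ⟨k1, hk1pos, ρ', σ', hρ', hσ', hunit', hval', hform'⟩ :=
    exists_kernel (Nat.succ_pos k) hk B (by rw [hvB]; exact hvC)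
  refine ⟨k1, hk1pos, ?_, ρ', j0.succAbove ∘ σ', hρ', Fin.succAbove_right_injective.comp hσ', ?_, ?_, ?_⟩
  · simpa using Fintype.card_le_of_injective σ' hσ'
  · have : B.submatrix ρ' σ' = C.submatrix ρ' (j0.succAbove ∘ σ') := rfl
    rw [← this]; exact hunit'
  · have : B.submatrix ρ' σ' = C.submatrix ρ' (j0.succAbove ∘ σ') := rfl
    rw [← this, hval', hvB]
  · have : B.submatrix ρ' σ' = C.submatrix ρ' (j0.succAbove ∘ σ') := rfl
    rw [← this, ← hvB]; exact hform'


end Final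

end Aux

/-- A matrix game with nonzero value has a completely mixed Shapley–Snow kernel
(a cmv-kernel): a square invertible submatrix `Ā` with
`val(Ā) = val(A) = (𝟏ᵀ Ā⁻¹ 𝟏)⁻¹` all of whose optimal strategy pairs are strictly
positive in every component. -/
theorem exists_cmv_shapley_snow_kernel {m n : ℕ} (hm : 0 < m) (hn : 0 < n)
    (A : Matrix (Fin m) (Fin n) ℝ) (hval : matrixVal A ≠ 0) :
    ∃ (k : ℕ) (_ : 0 < k) (ρ : Fin k → Fin m) (σ : Fin k → Fin n),
      Function.Injective ρ ∧ Function.Injective σ ∧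
      IsUnit (A.submatrix ρ σ).det ∧
      matrixVal (A.submatrix ρ σ) = matrixVal A ∧
      matrixVal A = (∑ i, ∑ j, (A.submatrix ρ σ)⁻¹ i j)⁻¹ ∧
      (∀ x0 y0, IsOptimalPair (A.submatrix ρ σ) x0 y0 →
        (∀ i, 0 < x0 i) ∧ (∀ j, 0 < y0 j)) := by
  classical
  set P : ℕ → Prop := fun k => 0 < k ∧ ∃ (ρ : Fin k → Fin m) (σ : Fin k → Fin n),
      Function.Injective ρ ∧ Function.Injective σ ∧
      IsUnit (A.submatrix ρ σ).det ∧
      matrixVal (A.submatrix ρ σ) = matrixVal A ∧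
      matrixVal A = (∑ i, ∑ j, (A.submatrix ρ σ)⁻¹ i j)⁻¹ with hP_def
  have hex : ∃ k, P k := by
    obtain ⟨k, hkpos, ρ, σ, h⟩ := exists_kernel hm hn A hval
    exact ⟨k, hkpos, ρ, σ, h⟩
  obtain ⟨K, hPK, hKmin⟩ : ∃ K, P K ∧ ∀ l, l < K → ¬ P l :=
    ⟨Nat.find hex, Nat.find_spec hex, fun l hl => Nat.find_min hex hl⟩
  obtain ⟨hKpos, ρ, σ, hρ, hσ, hunit, hvs, hform⟩ := hPK
  refine ⟨K, hKpos, ρ, σ, hρ, hσ, hunit, hvs, hform, ?_⟩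
  intro x0 y0 hopt
  set C : Matrix (Fin K) (Fin K) ℝ := A.submatrix ρ σ with hC_def
  have hvC : matrixVal C ≠ 0 := by rw [hvs]; exact hval
  constructor
  · intro i0
    by_contra hneg
    push_neg at hneg
    have hzero : x0 i0 = 0 := le_antisymm hneg (hopt.1.1 i0)
    -- K cannot be 1
    rcases K with _ | k
    · exact absurd hKpos (lt_irrefl 0)
    rcases Nat.eq_zero_or_pos k with rfl | hkpos
    · have h1 : (1:ℝ) = 0 := by
        rw [← hopt.1.2, Fin.sum_univ_one, Subsingleton.elim (0 : Fin 1) i0, hzero]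
      norm_num at h1
    obtain ⟨k1, hk1pos, hk1le, ρ1, σ1, hρ1, hσ1, hu1, hv1, hf1⟩ :=
      shrink_row hkpos C hvC hopt i0 hzero
    refine hKmin k1 (lt_of_le_of_lt hk1le (Nat.lt_succ_self k)) ⟨hk1pos, ρ ∘ ρ1, σ ∘ σ1,
      hρ.comp hρ1, hσ.comp hσ1, ?_, ?_, ?_⟩
    · have : C.submatrix ρ1 σ1 = A.submatrix (ρ ∘ ρ1) (σ ∘ σ1) := rfl
      rw [← this]; exact hu1
    · have : C.submatrix ρ1 σ1 = A.submatrix (ρ ∘ ρ1) (σ ∘ σ1) := rfl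
      rw [← this, hv1, hvs]
    · have : C.submatrix ρ1 σ1 = A.submatrix (ρ ∘ ρ1) (σ ∘ σ1) := rfl
      rw [← this, ← hvs]; exact hf1
  · intro j0
    by_contra hneg
    push_neg at hneg
    have hzero : y0 j0 = 0 := le_antisymm hneg (hopt.2.1.1 j0)
    rcases K with _ | k
    · exact absurd hKpos (lt_irrefl 0)
    rcases Nat.eq_zero_or_pos k with rfl | hkpos
    · have h1 : (1:ℝ) = 0 := by
        rw [← hopt.2.1.2, Fin.sum_univ_one, Subsingleton.elim (0 : Fin 1) j0, hzero]
      norm_num at h1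
    obtain ⟨k1, hk1pos, hk1le, ρ1, σ1, hρ1, hσ1, hu1, hv1, hf1⟩ :=
      shrink_col hkpos C hvC hopt j0 hzero
    refine hKmin k1 (lt_of_le_of_lt hk1le (Nat.lt_succ_self k)) ⟨hk1pos, ρ ∘ ρ1, σ ∘ σ1,
      hρ.comp hρ1, hσ.comp hσ1, ?_, ?_, ?_⟩
    · have : C.submatrix ρ1 σ1 = A.submatrix (ρ ∘ ρ1) (σ ∘ σ1) := rfl
      rw [← this]; exact hu1
    · have : C.submatrix ρ1 σ1 = A.submatrix (ρ ∘ ρ1) (σ ∘ σ1) := rfl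
      rw [← this, hv1, hvs]
    · have : C.submatrix ρ1 σ1 = A.submatrix (ρ ∘ ρ1) (σ ∘ σ1) := rfl
      rw [← this, ← hvs]; exact hf1
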